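/- If a connected hole-free particle configuration σ on the triangular lattice has every particle incident to at least one occupied triangle, then its perimeter is at least √(πn/√3) > √n, where n is the number of particles. -/

import Mathlib

open Finset

/-- The six neighbor displacement vectors of the triangular lattice Γ, realized on ℤ × ℤ. -/
def triNbrs : List (ℤ × ℤ) := [(1,0), (-1,0), (0,1), (0,-1), (1,1), (-1,-1)]

/-- Translation of a lattice point by a displacement. -/
def shift (v d : ℤ × ℤ) : ℤ × ℤ := (v.1 + d.1, v.2 + d.2)

/-- Adjacency in the triangular lattice Γ. -/
def TriAdj (v w : ℤ × ℤ) : Prop := (w.1 - v.1, w.2 - v.2) ∈ triNbrs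

/-- A particle configuration: a finite set of occupied vertices of Γ. -/
abbrev Config := Finset (ℤ × ℤ)

/-- A configuration is connected if it is nonempty and any two occupied vertices are
joined by a path through occupied vertices. -/
def ConnectedConfig (σ : Config) : Prop :=
  σ.Nonempty ∧ ∀ v ∈ σ, ∀ w ∈ σ,
    Relation.ReflTransGen (fun a b => TriAdj a b ∧ a ∈ σ ∧ b ∈ σ) v w

/-- The connected component of a vertex within the set of unoccupied vertices. -/
def compComponent (σ : Config) (v : ℤ × ℤ) : Set (ℤ × ℤ) :=
  {w | Relation.ReflTransGen (fun a b => TriAdj a b ∧ a ∉ σ ∧ b ∉ σ) v w}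

/-- A hole is a finite maximal component of unoccupied vertices; σ is hole-free
exactly when every unoccupied vertex lies in an infinite component of unoccupied vertices. -/
def HoleFree (σ : Config) : Prop := ∀ v, v ∉ σ → (compComponent σ v).Infinite

/-- Number of triangles of σ: lattice faces with all three vertices occupied.
The faces of Γ are the upward faces {v, v+(1,0), v+(1,1)} and the downward faces
{v, v+(0,1), v+(1,1)}. -/
def triangles (σ : Config) : ℕ :=
  (σ.filter (fun v => shift v (1,0) ∈ σ ∧ shift v (1,1) ∈ σ)).card +
  (σ.filter (fun v => shift v (0,1) ∈ σ ∧ shift v (1,1) ∈ σ)).card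

/-- Number of edges of σ: lattice edges with both endpoints occupied. -/
def edges (σ : Config) : ℕ :=
  (σ.filter (fun v => shift v (1,0) ∈ σ)).card +
  (σ.filter (fun v => shift v (0,1) ∈ σ)).card +
  (σ.filter (fun v => shift v (1,1) ∈ σ)).card

/-- Perimeter of σ: the length of the boundary walk around σ.  For a connected
hole-free configuration, the boundary walk traverses each occupied edge once for
each of its two adjacent lattice faces that is not fully occupied (so an edge
traversed twice is counted twice).  The two faces adjacent to the edge v–v+(1,0)
have third vertices v+(1,1) and v+(0,-1); those adjacent to v–v+(0,1) have third
vertices v+(1,1) and v+(-1,0); those adjacent to v–v+(1,1) have third vertices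
v+(1,0) and v+(0,1). -/
def perim (σ : Config) : ℕ :=
  (∑ v ∈ σ.filter (fun v => shift v (1,0) ∈ σ),
    ((if shift v (1,1) ∈ σ then 0 else 1) + (if shift v (0,-1) ∈ σ then 0 else 1))) +
  (∑ v ∈ σ.filter (fun v => shift v (0,1) ∈ σ),
    ((if shift v (1,1) ∈ σ then 0 else 1) + (if shift v (-1,0) ∈ σ then 0 else 1))) +
  (∑ v ∈ σ.filter (fun v => shift v (1,1) ∈ σ),
    ((if shift v (1,0) ∈ σ then 0 else 1) + (if shift v (0,1) ∈ σ then 0 else 1)))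

/-- Lexicographic order on lattice points, used to normalize configurations up to
translation. -/
def lexLe (a b : ℤ × ℤ) : Prop := a.1 < b.1 ∨ (a.1 = b.1 ∧ a.2 ≤ b.2)

/-- A configuration is normalized if its lexicographically least vertex is the origin;
each translation equivalence class of configurations contains exactly one normalized
representative, so normalized configurations count configurations up to translation. -/
def Normalized (σ : Config) : Prop := ((0,0) : ℤ × ℤ) ∈ σ ∧ ∀ v ∈ σ, lexLe (0,0) v

/-- A function is subexponential if it is eventually dominated by every exponential. -/
def Subexp (f : ℕ → ℝ) : Prop := ∀ c : ℝ, 1 < c → ∀ᶠ k in Filter.atTop, f k ≤ c ^ k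

/-- A vertex is incident to an occupied triangle of σ if it is one of the three
vertices of some lattice face all of whose vertices are occupied. -/
def InOccupiedTriangle (σ : Config) (v : ℤ × ℤ) : Prop :=
  ∃ w : ℤ × ℤ, w ∈ σ ∧
    ((shift w (1,0) ∈ σ ∧ shift w (1,1) ∈ σ ∧ (v = w ∨ v = shift w (1,0) ∨ v = shift w (1,1))) ∨
     (shift w (0,1) ∈ σ ∧ shift w (1,1) ∈ σ ∧ (v = w ∨ v = shift w (0,1) ∨ v = shift w (1,1))))


def lin (a b : ℤ) (v : ℤ × ℤ) : ℤ := a * v.1 + b * v.2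

lemma lin_shift (a b : ℤ) (v d : ℤ × ℤ) : lin a b (shift v d) = lin a b v + lin a b d := by
  simp [lin, shift]; ring

lemma shift_shift (v u w : ℤ × ℤ) : shift (shift v u) w = shift v (u.1 + w.1, u.2 + w.2) := by
  simp [shift, Prod.ext_iff]; constructor <;> ring

def plusd (d₁ d₂ : ℤ × ℤ) (t : Bool) : ℤ × ℤ := cond t (d₂.1 - d₁.1, d₂.2 - d₁.2) d₂
def minusd (d₁ d₂ : ℤ × ℤ) (t : Bool) : ℤ × ℤ := cond t d₁ (d₁.1 - d₂.1, d₁.2 - d₂.2)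

def wt (σ : Config) (d₁ d₂ : ℤ × ℤ) (e : (ℤ × ℤ) × Bool) : ℕ :=
  (if shift e.1 (plusd d₁ d₂ e.2) ∈ σ then 0 else 1) +
  (if shift e.1 (minusd d₁ d₂ e.2) ∈ σ then 0 else 1)

def key (d₁ d₂ : ℤ × ℤ) (ma mb : ℤ) (e : (ℤ × ℤ) × Bool) : ℤ :=
  2 * lin ma mb e.1 + lin ma mb (cond e.2 d₂ d₁)

def Eset (σ : Config) (d₁ d₂ : ℤ × ℤ) (a b c : ℤ) : Finset ((ℤ × ℤ) × Bool) :=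
  ((σ.filter (fun v => shift v d₁ ∈ σ ∧ lin a b v = c)).image (fun v => (v, false))) ∪
  ((σ.filter (fun v => shift v d₂ ∈ σ ∧ lin a b v = c)).image (fun v => (v, true)))

lemma mem_Eset {σ : Config} {d₁ d₂ : ℤ × ℤ} {a b c : ℤ} {e : (ℤ × ℤ) × Bool} :
    e ∈ Eset σ d₁ d₂ a b c ↔ e.1 ∈ σ ∧ shift e.1 (cond e.2 d₂ d₁) ∈ σ ∧ lin a b e.1 = c := by
  obtain ⟨v, t⟩ := e
  cases t <;> simp [Eset, Prod.ext_iff]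

section Column
variable {σ : Config} {d₁ d₂ : ℤ × ℤ} {a b ma mb c : ℤ}

lemma column_bound (hl1 : lin a b d₁ = 1) (hl2 : lin a b d₂ = 1)
    (hδ : lin ma mb d₁ < lin ma mb d₂)
    (hne : (Eset σ d₁ d₂ a b c).Nonempty) :
    2 ≤ ∑ e ∈ Eset σ d₁ d₂ a b c, wt σ d₁ d₂ e := by
  obtain ⟨eM, hM, hMmax⟩ := Finset.exists_max_image (Eset σ d₁ d₂ a b c) (key d₁ d₂ ma mb) hne
  obtain ⟨em, hm, hmmin⟩ := Finset.exists_min_image (Eset σ d₁ d₂ a b c) (key d₁ d₂ ma mb) hne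
  have hMp : shift eM.1 (plusd d₁ d₂ eM.2) ∉ σ := by
    obtain ⟨v, t⟩ := eM
    rw [mem_Eset] at hM
    obtain ⟨hv, hvd, hvc⟩ := hM
    simp only [Prod.fst, Prod.snd] at hv hvd hvc ⊢
    cases t with
    | false =>
      intro h
      have hmem : ((v, true) : (ℤ × ℤ) × Bool) ∈ Eset σ d₁ d₂ a b c := by
        rw [mem_Eset]; exact ⟨hv, by simpa [plusd] using h, hvc⟩
      have := hMmax _ hmem
      simp only [key, cond] at this
      omega
    | true =>
      intro h
      have hv' : shift (shift v (d₂.1 - d₁.1, d₂.2 - d₁.2)) d₁ = shift v d₂ := by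
        simp only [shift, Prod.ext_iff]; constructor <;> ring
      have hmem : ((shift v (d₂.1 - d₁.1, d₂.2 - d₁.2), false) : (ℤ × ℤ) × Bool) ∈
          Eset σ d₁ d₂ a b c := by
        rw [mem_Eset]
        refine ⟨by simpa [plusd] using h, ?_, ?_⟩
        · show shift (shift v (d₂.1 - d₁.1, d₂.2 - d₁.2)) d₁ ∈ σ
          rw [hv']; exact hvd
        · show lin a b (shift v (d₂.1 - d₁.1, d₂.2 - d₁.2)) = c
          rw [lin_shift]
          have : lin a b (d₂.1 - d₁.1, d₂.2 - d₁.2) = lin a b d₂ - lin a b d₁ := by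
            simp [lin]; ring
          omega
      have := hMmax _ hmem
      simp only [key, cond, lin_shift] at this
      have hlm : lin ma mb (d₂.1 - d₁.1, d₂.2 - d₁.2) = lin ma mb d₂ - lin ma mb d₁ := by
        simp [lin]; ring
      omega
  have hmp : shift em.1 (minusd d₁ d₂ em.2) ∉ σ := by
    obtain ⟨v, t⟩ := em
    rw [mem_Eset] at hm
    obtain ⟨hv, hvd, hvc⟩ := hm
    simp only [Prod.fst, Prod.snd] at hv hvd hvc ⊢
    cases t with
    | true =>
      intro h
      have hmem : ((v, false) : (ℤ × ℤ) × Bool) ∈ Eset σ d₁ d₂ a b c := by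
        rw [mem_Eset]; exact ⟨hv, by simpa [minusd] using h, hvc⟩
      have := hmmin _ hmem
      simp only [key, cond] at this
      omega
    | false =>
      intro h
      have hv' : shift (shift v (d₁.1 - d₂.1, d₁.2 - d₂.2)) d₂ = shift v d₁ := by
        simp only [shift, Prod.ext_iff]; constructor <;> ring
      have hmem : ((shift v (d₁.1 - d₂.1, d₁.2 - d₂.2), true) : (ℤ × ℤ) × Bool) ∈
          Eset σ d₁ d₂ a b c := by
        rw [mem_Eset]
        refine ⟨by simpa [minusd] using h, ?_, ?_⟩
        · show shift (shift v (d₁.1 - d₂.1, d₁.2 - d₂.2)) d₂ ∈ σ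
          rw [hv']; exact hvd
        · show lin a b (shift v (d₁.1 - d₂.1, d₁.2 - d₂.2)) = c
          rw [lin_shift]
          have : lin a b (d₁.1 - d₂.1, d₁.2 - d₂.2) = lin a b d₁ - lin a b d₂ := by
            simp [lin]; ring
          omega
      have := hmmin _ hmem
      simp only [key, cond, lin_shift] at this
      have hlm : lin ma mb (d₁.1 - d₂.1, d₁.2 - d₂.2) = lin ma mb d₁ - lin ma mb d₂ := by
        simp [lin]; ring
      omega
  by_cases heq : eM = em
  · have h2 : 2 ≤ wt σ d₁ d₂ eM := by
      unfold wt
      rw [if_neg hMp, if_neg (by rw [heq]; exact hmp)]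
    calc 2 ≤ wt σ d₁ d₂ eM := h2
    _ ≤ ∑ e ∈ Eset σ d₁ d₂ a b c, wt σ d₁ d₂ e :=
      Finset.single_le_sum (fun _ _ => Nat.zero_le _) hM
  · have hsub : ({eM, em} : Finset ((ℤ × ℤ) × Bool)) ⊆ Eset σ d₁ d₂ a b c := by
      intro x hx; simp at hx; rcases hx with rfl | rfl <;> assumption
    have : ∑ e ∈ ({eM, em} : Finset ((ℤ × ℤ) × Bool)), wt σ d₁ d₂ e ≤
        ∑ e ∈ Eset σ d₁ d₂ a b c, wt σ d₁ d₂ e :=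
      Finset.sum_le_sum_of_subset hsub
    rw [Finset.sum_pair heq] at this
    have h1 : 1 ≤ wt σ d₁ d₂ eM := by unfold wt; rw [if_neg hMp]; omega
    have h2 : 1 ≤ wt σ d₁ d₂ em := by unfold wt; rw [if_neg hmp]; omega
    omega
end Column

-- crossing lemma along a path
lemma cross_path {σ : Config} {a b : ℤ}
    (hstep : ∀ d ∈ triNbrs, -1 ≤ lin a b d ∧ lin a b d ≤ 1)
    {u w : ℤ × ℤ}
    (hpath : Relation.ReflTransGen (fun x y => TriAdj x y ∧ x ∈ σ ∧ y ∈ σ) u w)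
    {c : ℤ} (hu : lin a b u ≤ c) (hw : c < lin a b w) :
    ∃ x ∈ σ, ∃ d ∈ triNbrs, lin a b d = 1 ∧ lin a b x = c ∧ shift x d ∈ σ := by
  induction hpath with
  | refl => omega
  | tail hp hs ih =>
    rename_i y z
    obtain ⟨hadj, hy, hz⟩ := hs
    have hd : (z.1 - y.1, z.2 - y.2) ∈ triNbrs := hadj
    have hzy : shift y (z.1 - y.1, z.2 - y.2) = z := by
      simp [shift]
    have hlz : lin a b z = lin a b y + lin a b (z.1 - y.1, z.2 - y.2) := by
      rw [← hzy, lin_shift, hzy]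
    by_cases hyc : lin a b y ≤ c
    · -- last step crosses
      have := hstep _ hd
      refine ⟨y, hy, (z.1 - y.1, z.2 - y.2), hd, by omega, by omega, by rw [hzy]; exact hz⟩
    · exact ih (by omega)

lemma Eset_nonempty {σ : Config} {d₁ d₂ : ℤ × ℤ} {a b : ℤ}
    (hconn : ConnectedConfig σ) (hσ : σ.Nonempty)
    (hstep : ∀ d ∈ triNbrs, -1 ≤ lin a b d ∧ lin a b d ≤ 1)
    (hone : ∀ d ∈ triNbrs, lin a b d = 1 → d = d₁ ∨ d = d₂)
    {c : ℤ} (hc : σ.inf' hσ (lin a b) ≤ c) (hc' : c < σ.sup' hσ (lin a b)) :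
    (Eset σ d₁ d₂ a b c).Nonempty := by
  obtain ⟨u, hu, huv⟩ := Finset.exists_mem_eq_inf' hσ (lin a b)
  obtain ⟨w, hw, hwv⟩ := Finset.exists_mem_eq_sup' hσ (lin a b)
  have hpath := hconn.2 u hu w hw
  obtain ⟨x, hx, d, hd, hd1, hxc, hxd⟩ := cross_path (c := c) hstep hpath (by rw [← huv]; exact hc) (by rw [← hwv]; exact hc')
  rcases hone d hd hd1 with rfl | rfl
  · exact ⟨(x, false), mem_Eset.2 ⟨hx, hxd, hxc⟩⟩
  · exact ⟨(x, true), mem_Eset.2 ⟨hx, hxd, hxc⟩⟩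

def Sdir (σ : Config) (d₁ d₂ : ℤ × ℤ) : ℕ :=
  (∑ v ∈ σ.filter (fun v => shift v d₁ ∈ σ), wt σ d₁ d₂ (v, false)) +
  (∑ v ∈ σ.filter (fun v => shift v d₂ ∈ σ), wt σ d₁ d₂ (v, true))

lemma Sdir_bound {σ : Config} {d₁ d₂ : ℤ × ℤ} {a b ma mb : ℤ}
    (hconn : ConnectedConfig σ) (hσ : σ.Nonempty)
    (hl1 : lin a b d₁ = 1) (hl2 : lin a b d₂ = 1)
    (hstep : ∀ d ∈ triNbrs, -1 ≤ lin a b d ∧ lin a b d ≤ 1)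
    (hone : ∀ d ∈ triNbrs, lin a b d = 1 → d = d₁ ∨ d = d₂)
    (hδ : lin ma mb d₁ < lin ma mb d₂) :
    2 * (σ.sup' hσ (lin a b) - σ.inf' hσ (lin a b)).toNat ≤ Sdir σ d₁ d₂ := by
  set lo := σ.inf' hσ (lin a b) with hlo
  set hi := σ.sup' hσ (lin a b) with hhi
  have hcard : (Finset.Icc lo (hi - 1)).card = (hi - lo).toNat := by
    rw [Int.card_Icc]
    omega
  have hcol : ∀ c ∈ Finset.Icc lo (hi - 1),
      2 ≤ ∑ e ∈ Eset σ d₁ d₂ a b c, wt σ d₁ d₂ e := by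
    intro c hc
    rw [Finset.mem_Icc] at hc
    exact column_bound hl1 hl2 hδ
      (Eset_nonempty hconn hσ hstep hone hc.1 (by omega))
  have hdisj : (↑(Finset.Icc lo (hi - 1) : Finset ℤ) : Set ℤ).PairwiseDisjoint
      (fun c => Eset σ d₁ d₂ a b c) := by
    intro c₁ _ c₂ _ hne
    simp only [Function.onFun, Finset.disjoint_left]
    intro e he1 he2
    rw [mem_Eset] at he1 he2
    exact hne (he1.2.2 ▸ he2.2.2.symm ▸ rfl)
  have h1 : 2 * (hi - lo).toNat ≤
      ∑ c ∈ Finset.Icc lo (hi - 1), ∑ e ∈ Eset σ d₁ d₂ a b c, wt σ d₁ d₂ e := by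
    calc 2 * (hi - lo).toNat = ∑ _c ∈ Finset.Icc lo (hi - 1), 2 := by
          rw [Finset.sum_const, hcard, smul_eq_mul, mul_comm]
    _ ≤ _ := Finset.sum_le_sum hcol
  rw [← Finset.sum_biUnion hdisj] at h1
  refine h1.trans ?_
  have hsub : (Finset.Icc lo (hi - 1)).biUnion (fun c => Eset σ d₁ d₂ a b c) ⊆
      ((σ.filter (fun v => shift v d₁ ∈ σ)).image (fun v => (v, false))) ∪
      ((σ.filter (fun v => shift v d₂ ∈ σ)).image (fun v => (v, true))) := by
    intro e he
    rw [Finset.mem_biUnion] at he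
    obtain ⟨c, _, he⟩ := he
    rw [mem_Eset] at he
    obtain ⟨v, t⟩ := e
    cases t
    · exact Finset.mem_union_left _ (Finset.mem_image.2 ⟨v, Finset.mem_filter.2 ⟨he.1, he.2.1⟩, rfl⟩)
    · exact Finset.mem_union_right _ (Finset.mem_image.2 ⟨v, Finset.mem_filter.2 ⟨he.1, he.2.1⟩, rfl⟩)
  have := Finset.sum_le_sum_of_subset (f := wt σ d₁ d₂) hsub
  refine this.trans ?_
  rw [Finset.sum_union ?hdisj2]
  case hdisj2 =>
    simp only [Finset.disjoint_left, Finset.mem_image]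
    rintro e ⟨v, _, rfl⟩ ⟨v', _, h⟩
    simp [Prod.ext_iff] at h
  have e1 : ∑ e ∈ (σ.filter (fun v => shift v d₁ ∈ σ)).image (fun v => (v, false)),
      wt σ d₁ d₂ e = ∑ v ∈ σ.filter (fun v => shift v d₁ ∈ σ), wt σ d₁ d₂ (v, false) :=
    Finset.sum_image (by intro x _ y _ h; simpa [Prod.ext_iff] using h)
  have e2 : ∑ e ∈ (σ.filter (fun v => shift v d₂ ∈ σ)).image (fun v => (v, true)),
      wt σ d₁ d₂ e = ∑ v ∈ σ.filter (fun v => shift v d₂ ∈ σ), wt σ d₁ d₂ (v, true) :=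
    Finset.sum_image (by intro x _ y _ h; simpa [Prod.ext_iff] using h)
  rw [e1, e2]
  exact le_refl _

def Apart (σ : Config) : ℕ :=
  ∑ v ∈ σ.filter (fun v => shift v (1,0) ∈ σ),
    ((if shift v (1,1) ∈ σ then 0 else 1) + (if shift v (0,-1) ∈ σ then 0 else 1))
def Bpart (σ : Config) : ℕ :=
  ∑ v ∈ σ.filter (fun v => shift v (0,1) ∈ σ),
    ((if shift v (1,1) ∈ σ then 0 else 1) + (if shift v (-1,0) ∈ σ then 0 else 1))
def Cpart (σ : Config) : ℕ :=
  ∑ v ∈ σ.filter (fun v => shift v (1,1) ∈ σ),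
    ((if shift v (1,0) ∈ σ then 0 else 1) + (if shift v (0,1) ∈ σ then 0 else 1))

lemma perim_eq (σ : Config) : perim σ = Apart σ + Bpart σ + Cpart σ := rfl

lemma sdirX (σ : Config) : Sdir σ (1,0) (1,1) = Apart σ + Cpart σ := by
  have h1 : (∑ v ∈ σ.filter (fun v => shift v (1,0) ∈ σ), wt σ (1,0) (1,1) (v, false))
      = Apart σ := by
    refine Finset.sum_congr rfl fun v _ => ?_
    norm_num [wt, plusd, minusd, Apart]
    try ring
  have h2 : (∑ v ∈ σ.filter (fun v => shift v (1,1) ∈ σ), wt σ (1,0) (1,1) (v, true))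
      = Cpart σ := by
    refine Finset.sum_congr rfl fun v _ => ?_
    norm_num [wt, plusd, minusd]
    try ring
  unfold Sdir Apart Cpart at *
  rw [h1, h2]

lemma sdirY (σ : Config) : Sdir σ (0,1) (1,1) = Bpart σ + Cpart σ := by
  have h1 : (∑ v ∈ σ.filter (fun v => shift v (0,1) ∈ σ), wt σ (0,1) (1,1) (v, false))
      = Bpart σ := by
    refine Finset.sum_congr rfl fun v _ => ?_
    norm_num [wt, plusd, minusd]
    try ring
  have h2 : (∑ v ∈ σ.filter (fun v => shift v (1,1) ∈ σ), wt σ (0,1) (1,1) (v, true))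
      = Cpart σ := by
    refine Finset.sum_congr rfl fun v _ => ?_
    norm_num [wt, plusd, minusd]
    try ring
  unfold Sdir Bpart Cpart at *
  rw [h1, h2]

lemma sdirZ (σ : Config) : Sdir σ (1,0) (0,-1) = Apart σ + Bpart σ := by
  have h1 : (∑ v ∈ σ.filter (fun v => shift v (1,0) ∈ σ), wt σ (1,0) (0,-1) (v, false))
      = Apart σ := by
    refine Finset.sum_congr rfl fun v _ => ?_
    norm_num [wt, plusd, minusd]
    try ring
  have h2 : (∑ v ∈ σ.filter (fun v => shift v (0,-1) ∈ σ), wt σ (1,0) (0,-1) (v, true))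
      = Bpart σ := by
    refine Finset.sum_nbij' (fun v => shift v (0,-1)) (fun w => shift w (0,1)) ?_ ?_ ?_ ?_ ?_
    · intro v hv
      rw [Finset.mem_filter] at hv ⊢
      refine ⟨hv.2, ?_⟩
      have h : shift (shift v (0,-1)) (0,1) = v := by
        simp only [shift, Prod.ext_iff]; constructor <;> ring
      rw [h]; exact hv.1
    · intro w hw
      rw [Finset.mem_filter] at hw ⊢
      refine ⟨hw.2, ?_⟩
      have h : shift (shift w (0,1)) (0,-1) = w := by
        simp only [shift, Prod.ext_iff]; constructor <;> ring
      rw [h]; exact hw.1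
    · intro v _
      simp only [shift, Prod.ext_iff]; constructor <;> ring
    · intro w _
      simp only [shift, Prod.ext_iff]; constructor <;> ring
    · intro v _
      have ha : shift (shift v (0,-1)) (1,1) = shift v (1,0) := by
        simp only [shift, Prod.ext_iff]; constructor <;> ring
      have hb : shift (shift v (0,-1)) (-1,0) = shift v (-1,-1) := by
        simp only [shift, Prod.ext_iff]; constructor <;> ring
      rw [ha, hb]
      norm_num [wt, plusd, minusd]
      try ring
  unfold Sdir Apart Bpart at *
  rw [h1, h2]

lemma card_le_prod (σ : Config) (hσ : σ.Nonempty) (a b a' b' : ℤ)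
    (hinj : ∀ u v : ℤ × ℤ, lin a b u = lin a b v → lin a' b' u = lin a' b' v → u = v) :
    (σ.card : ℤ) ≤ (σ.sup' hσ (lin a b) - σ.inf' hσ (lin a b) + 1) *
      (σ.sup' hσ (lin a' b') - σ.inf' hσ (lin a' b') + 1) := by
  set lo1 := σ.inf' hσ (lin a b); set hi1 := σ.sup' hσ (lin a b)
  set lo2 := σ.inf' hσ (lin a' b'); set hi2 := σ.sup' hσ (lin a' b')
  obtain ⟨x0, hx0⟩ := hσ
  have h1 : lo1 ≤ hi1 := le_trans (Finset.inf'_le _ hx0) (Finset.le_sup' _ hx0)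
  have h2 : lo2 ≤ hi2 := le_trans (Finset.inf'_le _ hx0) (Finset.le_sup' _ hx0)
  have hcard : σ.card ≤ ((Finset.Icc lo1 hi1) ×ˢ (Finset.Icc lo2 hi2)).card := by
    apply Finset.card_le_card_of_injOn (fun v => (lin a b v, lin a' b' v))
    · intro v hv
      rw [Finset.mem_coe, Finset.mem_product, Finset.mem_Icc, Finset.mem_Icc]
      exact ⟨⟨Finset.inf'_le (lin a b) hv, Finset.le_sup' (lin a b) hv⟩,
             ⟨Finset.inf'_le (lin a' b') hv, Finset.le_sup' (lin a' b') hv⟩⟩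
    · intro u _ v _ h
      rw [Prod.ext_iff] at h
      exact hinj u v h.1 h.2
  have : (((Finset.Icc lo1 hi1) ×ˢ (Finset.Icc lo2 hi2)).card : ℤ) =
      (hi1 - lo1 + 1) * (hi2 - lo2 + 1) := by
    rw [Finset.card_product, Int.card_Icc, Int.card_Icc]
    push_cast [Int.toNat_of_nonneg (by omega : (0:ℤ) ≤ hi1 + 1 - lo1),
      Int.toNat_of_nonneg (by omega : (0:ℤ) ≤ hi2 + 1 - lo2)]
    ring
  calc (σ.card : ℤ) ≤ _ := by exact_mod_cast hcard
  _ = _ := this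

lemma amgm3 (a b c : ℤ) (ha : 0 ≤ a) (hb : 0 ≤ b) (hc : 0 ≤ c) :
    27 * (a * b * c) ≤ (a + b + c)^3 := by
  nlinarith [mul_nonneg ha (sq_nonneg (b - c)), mul_nonneg hb (sq_nonneg (a - c)),
    mul_nonneg hc (sq_nonneg (a - b)), mul_nonneg (mul_nonneg ha hb) hc,
    mul_nonneg ha (sq_nonneg (a - b)), mul_nonneg hb (sq_nonneg (b - c)),
    mul_nonneg hc (sq_nonneg (a - c))]

lemma final_real (n p : ℕ) (hn : 1 ≤ n) (hint : 729*(n:ℤ)^3 ≤ 64*(p:ℤ)^6) :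
    Real.sqrt (Real.pi * n / Real.sqrt 3) ≤ (p:ℝ) ∧
      Real.sqrt n < Real.sqrt (Real.pi * n / Real.sqrt 3) := by
  have hreal : 729*(n:ℝ)^3 ≤ 64*(p:ℝ)^6 := by exact_mod_cast hint
  have hkey : (9/4:ℝ)*(n:ℝ) ≤ (p:ℝ)^2 := by
    have h0 : (0:ℝ) ≤ (p:ℝ)^2 := by positivity
    refine le_of_pow_le_pow_left₀ (n := 3) (by norm_num) h0 ?_
    calc ((9/4:ℝ)*(n:ℝ))^3 = 729/64*(n:ℝ)^3 := by ring
    _ ≤ (p:ℝ)^6 := by linarith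
    _ = ((p:ℝ)^2)^3 := by ring
  have h3pos : (0:ℝ) < Real.sqrt 3 := Real.sqrt_pos.2 (by norm_num)
  have hs17 : (1.7:ℝ) ≤ Real.sqrt 3 := by
    rw [show (1.7:ℝ) = Real.sqrt (1.7^2) from (Real.sqrt_sq (by norm_num)).symm]
    apply Real.sqrt_le_sqrt; norm_num
  have hn0' : (0:ℝ) ≤ (n:ℝ) := by positivity
  have hpi : Real.pi * n / Real.sqrt 3 ≤ (9/4:ℝ)*(n:ℝ) := by
    rw [div_le_iff₀ h3pos]
    nlinarith [Real.pi_lt_d2, hn0', hs17]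
  constructor
  · rw [show ((p:ℝ)) = Real.sqrt ((p:ℝ)^2) from (Real.sqrt_sq (by positivity)).symm]
    exact Real.sqrt_le_sqrt (by linarith)
  · apply Real.sqrt_lt_sqrt (by positivity)
    rw [lt_div_iff₀ h3pos]
    have hs2 : Real.sqrt 3 < 2 := by
      nlinarith [Real.sq_sqrt (show (0:ℝ) ≤ 3 by norm_num), Real.sqrt_nonneg 3]
    have hn1' : (1:ℝ) ≤ (n:ℝ) := by exact_mod_cast hn
    nlinarith [Real.pi_gt_three]

set_option maxHeartbeats 800000 in
/-- if every particle of a connected hole-free configuration σ of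
n particles is incident to an occupied triangle, then p(σ) ≥ √(πn/√3) > √n. -/
theorem perimeter_isoperimetric (σ : Config) (n : ℕ) (hn : 1 ≤ n)
    (hcard : σ.card = n) (hconn : ConnectedConfig σ) (hhole : HoleFree σ)
    (htri : ∀ v ∈ σ, InOccupiedTriangle σ v) :
    Real.sqrt (Real.pi * n / Real.sqrt 3) ≤ (perim σ : ℝ) ∧
      Real.sqrt n < Real.sqrt (Real.pi * n / Real.sqrt 3) := by
  have hσ : σ.Nonempty := Finset.card_pos.1 (by omega)
  -- directional bounds
  have hbX := Sdir_bound (σ := σ) (d₁ := (1,0)) (d₂ := (1,1)) (a := 1) (b := 0)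
    (ma := 0) (mb := 1) hconn hσ (by norm_num [lin]) (by norm_num [lin])
    (by intro d hd; fin_cases hd <;> norm_num [lin])
    (by intro d hd; fin_cases hd <;> norm_num [lin])
    (by norm_num [lin])
  have hbY := Sdir_bound (σ := σ) (d₁ := (0,1)) (d₂ := (1,1)) (a := 0) (b := 1)
    (ma := 1) (mb := 0) hconn hσ (by norm_num [lin]) (by norm_num [lin])
    (by intro d hd; fin_cases hd <;> norm_num [lin])
    (by intro d hd; fin_cases hd <;> norm_num [lin])
    (by norm_num [lin])
  have hbZ := Sdir_bound (σ := σ) (d₁ := (1,0)) (d₂ := (0,-1)) (a := 1) (b := -1)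
    (ma := -1) (mb := 0) hconn hσ (by norm_num [lin]) (by norm_num [lin])
    (by intro d hd; fin_cases hd <;> norm_num [lin])
    (by intro d hd; fin_cases hd <;> norm_num [lin])
    (by norm_num [lin])
  rw [sdirX] at hbX
  rw [sdirY] at hbY
  rw [sdirZ] at hbZ
  set XI : ℤ := σ.sup' hσ (lin 1 0) - σ.inf' hσ (lin 1 0) with hXIdef
  set YI : ℤ := σ.sup' hσ (lin 0 1) - σ.inf' hσ (lin 0 1) with hYIdef
  set ZI : ℤ := σ.sup' hσ (lin 1 (-1)) - σ.inf' hσ (lin 1 (-1)) with hZIdef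
  -- perimeter lower bound
  have hperim : XI + YI + ZI ≤ (perim σ : ℤ) := by
    have hp : XI.toNat + YI.toNat + ZI.toNat ≤ perim σ := by
      rw [perim_eq]; omega
    have h0 : 0 ≤ XI ∧ 0 ≤ YI ∧ 0 ≤ ZI := by
      have hx0 := hσ.choose_spec
      set x0 := hσ.choose
      refine ⟨?_, ?_, ?_⟩ <;>
        [skip; skip; skip] <;>
        simp only [hXIdef, hYIdef, hZIdef, sub_nonneg] <;>
        exact le_trans (Finset.inf'_le _ hx0) (Finset.le_sup' _ hx0)
    omega
  -- extents at least 1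
  have hv0 : hσ.choose ∈ σ := hσ.choose_spec
  obtain ⟨w, hw, hcase⟩ := htri hσ.choose hv0
  have hinf_le : ∀ (a b : ℤ), σ.inf' hσ (lin a b) ≤ lin a b w := fun a b => Finset.inf'_le _ hw
  have hXI1 : 1 ≤ XI := by
    have h11 : shift w (1,1) ∈ σ := by rcases hcase with ⟨_, h, _⟩ | ⟨_, h, _⟩ <;> exact h
    have hle : lin 1 0 (shift w (1,1)) ≤ σ.sup' hσ (lin 1 0) := Finset.le_sup' _ h11
    rw [lin_shift] at hle
    have : lin 1 0 ((1:ℤ),(1:ℤ)) = 1 := by norm_num [lin]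
    have h2 := hinf_le 1 0
    omega
  have hYI1 : 1 ≤ YI := by
    have h11 : shift w (1,1) ∈ σ := by rcases hcase with ⟨_, h, _⟩ | ⟨_, h, _⟩ <;> exact h
    have hle : lin 0 1 (shift w (1,1)) ≤ σ.sup' hσ (lin 0 1) := Finset.le_sup' _ h11
    rw [lin_shift] at hle
    have : lin 0 1 ((1:ℤ),(1:ℤ)) = 1 := by norm_num [lin]
    have h2 := hinf_le 0 1
    omega
  have hZI1 : 1 ≤ ZI := by
    rcases hcase with ⟨h10, _, _⟩ | ⟨h01, _, _⟩
    · have hle : lin 1 (-1) (shift w (1,0)) ≤ σ.sup' hσ (lin 1 (-1)) := Finset.le_sup' _ h10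
      rw [lin_shift] at hle
      have : lin 1 (-1) ((1:ℤ),(0:ℤ)) = 1 := by norm_num [lin]
      have h2 := hinf_le 1 (-1)
      omega
    · have hle : σ.inf' hσ (lin 1 (-1)) ≤ lin 1 (-1) (shift w (0,1)) := Finset.inf'_le _ h01
      rw [lin_shift] at hle
      have : lin 1 (-1) ((0:ℤ),(1:ℤ)) = -1 := by norm_num [lin]
      have h2 : lin 1 (-1) w ≤ σ.sup' hσ (lin 1 (-1)) := Finset.le_sup' _ hw
      omega
  -- cardinality bounds
  have hn1 : (n:ℤ) ≤ (XI + 1) * (YI + 1) := by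
    rw [← hcard]
    have := card_le_prod σ hσ 1 0 0 1 (by
      intro u v h1 h2
      simp [lin] at h1 h2
      exact Prod.ext_iff.2 ⟨by omega, by omega⟩)
    convert this using 2 <;> omega
  have hn2 : (n:ℤ) ≤ (YI + 1) * (ZI + 1) := by
    rw [← hcard]
    have := card_le_prod σ hσ 0 1 1 (-1) (by
      intro u v h1 h2
      simp [lin] at h1 h2
      exact Prod.ext_iff.2 ⟨by omega, by omega⟩)
    convert this using 2 <;> omega
  have hn3 : (n:ℤ) ≤ (XI + 1) * (ZI + 1) := by
    rw [← hcard]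
    have := card_le_prod σ hσ 1 0 1 (-1) (by
      intro u v h1 h2
      simp [lin] at h1 h2
      exact Prod.ext_iff.2 ⟨by omega, by omega⟩)
    convert this using 2 <;> omega
  -- integer isoperimetry
  have hn0 : (0:ℤ) ≤ (n:ℤ) := by positivity
  have hcube : (n:ℤ)^3 ≤ ((XI+1)*(YI+1)*(ZI+1))^2 := by
    calc (n:ℤ)^3 = (n:ℤ)*(n:ℤ)*(n:ℤ) := by ring
    _ ≤ ((XI+1)*(YI+1)) * ((YI+1)*(ZI+1)) * ((XI+1)*(ZI+1)) := by
        exact mul_le_mul (mul_le_mul hn1 hn2 hn0 (mul_nonneg (by omega) (by omega))) hn3 hn0 (mul_nonneg (by omega) (by omega))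
    _ = ((XI+1)*(YI+1)*(ZI+1))^2 := by ring
  have hamgm : 27*((XI+1)*(YI+1)*(ZI+1)) ≤ (XI+YI+ZI+3)^3 := by
    have := amgm3 (XI+1) (YI+1) (ZI+1) (by omega) (by omega) (by omega)
    calc 27*((XI+1)*(YI+1)*(ZI+1)) ≤ ((XI+1)+(YI+1)+(ZI+1))^3 := this
    _ = (XI+YI+ZI+3)^3 := by ring
  set s : ℤ := XI + YI + ZI + 3 with hsdef
  have hs6 : 6 ≤ s := by omega
  have hsp : s ≤ 2 * (perim σ : ℤ) := by omega
  have hprod0 : (0:ℤ) ≤ (XI+1)*(YI+1)*(ZI+1) :=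
    mul_nonneg (mul_nonneg (by omega) (by omega)) (by omega)
  have hint : 729*(n:ℤ)^3 ≤ 64*(perim σ:ℤ)^6 := by
    have t1 : (27*((XI+1)*(YI+1)*(ZI+1)))^2 ≤ (s^3)^2 :=
      pow_le_pow_left₀ (by linarith [hprod0]) hamgm 2
    have t2 : s^6 ≤ (2*(perim σ:ℤ))^6 := by
      calc s^6 = (s^3)^2 := by ring
      _ ≤ ((2*(perim σ:ℤ))^3)^2 := by
          apply pow_le_pow_left₀ (by positivity)
          exact pow_le_pow_left₀ (by omega) hsp 3
      _ = (2*(perim σ:ℤ))^6 := by ring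
    calc (729:ℤ)*(n:ℤ)^3 ≤ 729*((XI+1)*(YI+1)*(ZI+1))^2 := by linarith
    _ = (27*((XI+1)*(YI+1)*(ZI+1)))^2 := by ring
    _ ≤ (s^3)^2 := t1
    _ ≤ ((2*(perim σ:ℤ))^3)^2 := by
        apply pow_le_pow_left₀ (by positivity)
        exact pow_le_pow_left₀ (by omega) hsp 3
    _ = 64*(perim σ:ℤ)^6 := by ring
  exact final_real n (perim σ) hn hint
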